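/- Let A, B be Hermitian positive definite, and let Z_k be the Newton iteration for the unitary polar factor: Z_0 = R_B R_A^{-1}, Z_{k+1} = (Z_k + Z_k^{-*})/2, where A = R_A* R_A and B = R_B* R_B are Cholesky factorizations. Let A_k be the uncoupled averaging iteration A_0 = B, A_{k+1} = (A_k + A A_k^{-1} B)/2. Then Z_k = R_B^{-*} A_k R_A^{-1} for all k ≥ 0. -/

import Mathlib

open Matrix ComplexOrder

namespace Matrix.PosSemidef

/-- The square root of a positive semidefinite matrix (the definition of the older Mathlib). -/
noncomputable def sqrt {n : Type*} [Fintype n] [DecidableEq n] {𝕜 : Type*} [RCLike 𝕜]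
    {A : Matrix n n 𝕜} (hA : A.PosSemidef) : Matrix n n 𝕜 :=
  hA.1.eigenvectorUnitary.1 * diagonal ((↑) ∘ (√·) ∘ hA.1.eigenvalues) *
    (star hA.1.eigenvectorUnitary : Matrix n n 𝕜)

lemma posSemidef_sqrt {n : Type*} [Fintype n] [DecidableEq n] {𝕜 : Type*} [RCLike 𝕜]
    {A : Matrix n n 𝕜} (hA : A.PosSemidef) : hA.sqrt.PosSemidef := by
  unfold sqrt
  have h : (diagonal ((↑) ∘ (√·) ∘ hA.1.eigenvalues : n → 𝕜)).PosSemidef := by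
    refine posSemidef_diagonal_iff.mpr fun i => ?_
    simp only [Function.comp_apply]
    exact_mod_cast Real.sqrt_nonneg _
  have := h.mul_mul_conjTranspose_same (hA.1.eigenvectorUnitary : Matrix n n 𝕜)
  simpa [star_eq_conjTranspose] using this

end Matrix.PosSemidef

lemma geomMean_aux {n : ℕ} {A B : Matrix (Fin n) (Fin n) ℂ} (hA : A.PosDef) (hB : B.PosDef) :
    ((hA.posSemidef.sqrt)⁻¹ * B * (hA.posSemidef.sqrt)⁻¹).PosSemidef := by
  have h := hB.posSemidef.conjTranspose_mul_mul_same (hA.posSemidef.sqrt)⁻¹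
  rwa [(hA.posSemidef.posSemidef_sqrt.isHermitian.inv).eq] at h

/-- The geometric mean `A # B = A^{1/2} (A^{-1/2} B A^{-1/2})^{1/2} A^{1/2}` of two
Hermitian positive definite matrices. -/
noncomputable def geomMean {n : ℕ} {A B : Matrix (Fin n) (Fin n) ℂ}
    (hA : A.PosDef) (hB : B.PosDef) : Matrix (Fin n) (Fin n) ℂ :=
  hA.posSemidef.sqrt * (geomMean_aux hA hB).sqrt * hA.posSemidef.sqrt


lemma herm_shift_right {n : ℕ} {M W : Matrix (Fin n) (Fin n) ℂ} (hu : IsUnit W.det)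
    (h : (W * M)ᴴ = W * M) : (M * (Wᴴ)⁻¹)ᴴ = M * (Wᴴ)⁻¹ := by
  have huH : IsUnit (Wᴴ).det := by rw [Matrix.det_conjTranspose]; exact hu.star
  have h' : Mᴴ * Wᴴ = W * M := by rw [← Matrix.conjTranspose_mul]; exact h
  have hM : Mᴴ = W * M * (Wᴴ)⁻¹ := by
    rw [← h', Matrix.mul_nonsing_inv_cancel_right _ _ huH]
  rw [Matrix.conjTranspose_mul, Matrix.conjTranspose_nonsing_inv,
    Matrix.conjTranspose_conjTranspose, hM, Matrix.mul_assoc,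
    Matrix.nonsing_inv_mul_cancel_left _ _ hu]

lemma herm_shift_left {n : ℕ} {M W : Matrix (Fin n) (Fin n) ℂ} (hu : IsUnit W.det)
    (h : (M * W)ᴴ = M * W) : ((Wᴴ)⁻¹ * M)ᴴ = (Wᴴ)⁻¹ * M := by
  have huH : IsUnit (Wᴴ).det := by rw [Matrix.det_conjTranspose]; exact hu.star
  have h' : Wᴴ * Mᴴ = M * W := by rw [← Matrix.conjTranspose_mul]; exact h
  have hM : Mᴴ = (Wᴴ)⁻¹ * (M * W) := by
    rw [← h', Matrix.nonsing_inv_mul_cancel_left _ _ huH]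
  rw [Matrix.conjTranspose_mul, Matrix.conjTranspose_nonsing_inv,
    Matrix.conjTranspose_conjTranspose, hM, Matrix.mul_assoc Wᴴ⁻¹ (M * W) W⁻¹,
    Matrix.mul_nonsing_inv_cancel_right _ _ hu]

/-- With Cholesky factorizations `A = R_Aᴴ R_A`, `B = R_Bᴴ R_B`, the Newton iteration for the
unitary polar factor of `R_B R_A⁻¹` and the uncoupled averaging iteration `A_0 = B`,
`A_{k+1} = (A_k + A A_k⁻¹ B)/2` are related by `Z_k = R_B^{-ᴴ} A_k R_A⁻¹`. -/
theorem polar_newton_eq_averaging {n : ℕ} {A B RA RB : Matrix (Fin n) (Fin n) ℂ}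
    (hA : A.PosDef) (hB : B.PosDef)
    (hRA : IsUnit RA.det) (hRB : IsUnit RB.det)
    (hRAtri : RA.BlockTriangular (id : Fin n → Fin n))
    (hRBtri : RB.BlockTriangular (id : Fin n → Fin n))
    (hRAdiag : ∀ i, 0 < (RA i i).re ∧ (RA i i).im = 0)
    (hRBdiag : ∀ i, 0 < (RB i i).re ∧ (RB i i).im = 0)
    (hAfac : A = RAᴴ * RA) (hBfac : B = RBᴴ * RB)
    (Z As : ℕ → Matrix (Fin n) (Fin n) ℂ)
    (hZ0 : Z 0 = RB * RA⁻¹)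
    (hZrec : ∀ k, Z (k + 1) = (2 : ℂ)⁻¹ • (Z k + ((Z k)ᴴ)⁻¹))
    (hA0 : As 0 = B)
    (hArec : ∀ k, As (k + 1) = (2 : ℂ)⁻¹ • (As k + A * (As k)⁻¹ * B)) :
    ∀ k, Z k = (RBᴴ)⁻¹ * As k * RA⁻¹ := by
  have hRAH : IsUnit (RAᴴ).det := by rw [Matrix.det_conjTranspose]; exact hRA.star
  have hRBH : IsUnit (RBᴴ).det := by rw [Matrix.det_conjTranspose]; exact hRB.star
  have hRBi : IsUnit (RB⁻¹).det := Matrix.isUnit_nonsing_inv_det _ hRB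
  have hRAi : IsUnit (RA⁻¹).det := Matrix.isUnit_nonsing_inv_det _ hRA
  set D : Matrix (Fin n) (Fin n) ℂ := RA * RB⁻¹ with hD
  have hDdet : IsUnit D.det := by rw [hD, Matrix.det_mul]; exact hRA.mul hRBi
  have hDH : Dᴴ = (RBᴴ)⁻¹ * RAᴴ := by
    rw [hD, Matrix.conjTranspose_mul, Matrix.conjTranspose_nonsing_inv]
  suffices H : ∀ k, IsUnit (Z k).det ∧ (D * Z k)ᴴ = D * Z k ∧ (Z k * D)ᴴ = Z k * D ∧
      Z k = (RBᴴ)⁻¹ * As k * RA⁻¹ by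
    exact fun k => (H k).2.2.2
  intro k
  induction k with
  | zero =>
    have hDZ : D * Z 0 = 1 := by
      rw [hZ0, hD, Matrix.mul_assoc, Matrix.nonsing_inv_mul_cancel_left _ _ hRB,
        Matrix.mul_nonsing_inv _ hRA]
    have hZD : Z 0 * D = 1 := by
      rw [hZ0, hD, Matrix.mul_assoc, Matrix.nonsing_inv_mul_cancel_left _ _ hRA,
        Matrix.mul_nonsing_inv _ hRB]
    refine ⟨?_, ?_, ?_, ?_⟩
    · rw [hZ0, Matrix.det_mul]; exact hRB.mul hRAi
    · rw [hDZ]; simp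
    · rw [hZD]; simp
    · rw [hA0, hBfac, hZ0, ← Matrix.mul_assoc, Matrix.nonsing_inv_mul _ hRBH, Matrix.one_mul]
  | succ k ih =>
    obtain ⟨hu, hP, hQ, hE⟩ := ih
    have huH : IsUnit ((Z k)ᴴ).det := by rw [Matrix.det_conjTranspose]; exact hu.star
    have huHi : IsUnit (((Z k)ᴴ)⁻¹).det := Matrix.isUnit_nonsing_inv_det _ huH
    -- invertibility of Z (k+1)
    have hfac : Z k + ((Z k)ᴴ)⁻¹ = ((Z k)ᴴ)⁻¹ * ((Z k)ᴴ * Z k + 1) := by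
      rw [Matrix.mul_add, Matrix.mul_one, Matrix.nonsing_inv_mul_cancel_left _ _ huH]
    have hW : ((Z k)ᴴ * Z k + 1).PosDef :=
      Matrix.PosDef.posSemidef_add (Matrix.posSemidef_conjTranspose_mul_self (Z k)) Matrix.PosDef.one
    have hu1 : IsUnit (Z (k + 1)).det := by
      rw [hZrec k, Matrix.det_smul, hfac, Matrix.det_mul]
      exact (IsUnit.pow _ (by norm_num)).mul (huHi.mul hW.det_pos.ne'.isUnit)
    -- hermitian invariants
    have hP' : (D * ((Z k)ᴴ)⁻¹)ᴴ = D * ((Z k)ᴴ)⁻¹ := herm_shift_right hu hQ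
    have hQ' : (((Z k)ᴴ)⁻¹ * D)ᴴ = ((Z k)ᴴ)⁻¹ * D := herm_shift_left hu hP
    have hstar : (star ((2 : ℂ)⁻¹)) = (2 : ℂ)⁻¹ := by
      rw [star_inv₀]; norm_num
    have hP1 : (D * Z (k + 1))ᴴ = D * Z (k + 1) := by
      rw [hZrec k, Matrix.mul_smul, Matrix.mul_add, Matrix.conjTranspose_smul,
        Matrix.conjTranspose_add, hP, hP', hstar]
    have hQ1 : (Z (k + 1) * D)ᴴ = Z (k + 1) * D := by
      rw [hZrec k, Matrix.smul_mul, Matrix.add_mul, Matrix.conjTranspose_smul,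
        Matrix.conjTranspose_add, hQ, hQ', hstar]
    -- main equation
    have hAsk : As k = RBᴴ * (Z k * RA) := by
      rw [hE, Matrix.nonsing_inv_mul_cancel_right _ _ hRA,
        Matrix.mul_nonsing_inv_cancel_left _ _ hRBH]
    have hAski : (As k)⁻¹ = RA⁻¹ * ((Z k)⁻¹ * (RBᴴ)⁻¹) := by
      rw [hAsk, Matrix.mul_inv_rev, Matrix.mul_inv_rev, Matrix.mul_assoc]
    have hkey : (RBᴴ)⁻¹ * (A * (As k)⁻¹ * B) * RA⁻¹ = ((Z k)ᴴ)⁻¹ := by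
      have h1 : (RBᴴ)⁻¹ * (A * (As k)⁻¹ * B) * RA⁻¹ =
          Dᴴ * ((Z k)⁻¹ * (RB * RA⁻¹)) := by
        rw [hAski, hAfac, hBfac, hDH]
        simp only [Matrix.mul_assoc]
        rw [Matrix.mul_nonsing_inv_cancel_left _ _ hRA,
          Matrix.nonsing_inv_mul_cancel_left _ _ hRBH]
      have h2 : (Z k)ᴴ * (Dᴴ * ((Z k)⁻¹ * (RB * RA⁻¹))) = 1 := by
        have hZD' : (Z k)ᴴ * Dᴴ = D * Z k := by rw [← Matrix.conjTranspose_mul]; exact hP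
        rw [← Matrix.mul_assoc, hZD', Matrix.mul_assoc, Matrix.mul_nonsing_inv_cancel_left _ _ hu,
          hD, Matrix.mul_assoc, Matrix.nonsing_inv_mul_cancel_left _ _ hRB,
          Matrix.mul_nonsing_inv _ hRA]
      rw [h1, Matrix.inv_eq_right_inv h2]
    refine ⟨hu1, hP1, hQ1, ?_⟩
    rw [hZrec k, hArec k, Matrix.mul_smul, Matrix.smul_mul, Matrix.mul_add, Matrix.add_mul,
      ← hE, hkey]
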